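/- arXiv:1010.1967 — 2 statements merged into one kernel-verified Lean document; each statement's English description precedes it below -/
import Mathlib

section
/- Let P be a palindromic polynomial over ℂ (P̃ = P) of degree 2n with nonzero constant coefficient, with coefficients a_0,…,a_{2n} (so a_i = a_{2n−i}). Then for every z ∈ ℂ with z ≠ 0, writing w = (z + 1/z)/2, one has P(z)/(2zⁿ) = a_n/2 + Σ_{k=1}^{n} a_{n+k} · T_k(w), where T_k is the k-th Chebyshev polynomial of the first kind. (This is the paper's Proposition 2.9 with the k = 0 term correctly halved.) -/
lemma T_eval_half' (z w : ℂ) (hzw : z * w = 1) (k : ℕ) :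
    (Polynomial.Chebyshev.T ℂ k).eval ((z + w) / 2) = (z ^ k + w ^ k) / 2 := by
  induction k using Nat.twoStepInduction with
  | zero => simp [Polynomial.Chebyshev.T_zero]
  | one => simp [Polynomial.Chebyshev.T_one]
  | more k ih1 ih2 =>
    push_cast
    rw [Polynomial.Chebyshev.T_add_two]
    push_cast at ih1 ih2
    simp only [Polynomial.eval_sub, Polynomial.eval_mul, Polynomial.eval_ofNat,
      Polynomial.eval_X, ih1, ih2]
    linear_combination ((z ^ k + w ^ k) / 2) * hzw

theorem palindromic_chebyshev_expansion (n : ℕ) (P : Polynomial ℂ)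
    (hP0 : P.coeff 0 ≠ 0) (hdeg : P.natDegree = 2 * n)
    (hpal : P.reverse = P)
    (z : ℂ) (hz : z ≠ 0) :
    P.eval z / (2 * z ^ n) =
      P.coeff n / 2 +
        ∑ k ∈ Finset.Icc 1 n,
          P.coeff (n + k) *
            (Polynomial.Chebyshev.T ℂ k).eval ((z + 1 / z) / 2) := by
  have hcoeff : ∀ i, i ≤ 2 * n → P.coeff i = P.coeff (2 * n - i) := by
    intro i hi
    conv_lhs => rw [← hpal]
    rw [Polynomial.coeff_reverse, hdeg, Polynomial.revAt_le hi]
  have key : P.eval z = P.coeff n * z ^ n +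
      ∑ k ∈ Finset.Icc 1 n, P.coeff (n + k) * (z ^ (n + k) + z ^ (n - k)) := by
    rw [Polynomial.eval_eq_sum_range' (show P.natDegree < 2 * n + 1 by omega)]
    have hsplit : Finset.range (2 * n + 1) = Finset.range n ∪ Finset.Icc n (2 * n) := by
      ext i; simp; omega
    have hdisj : Disjoint (Finset.range n) (Finset.Icc n (2 * n)) := by
      simp [Finset.disjoint_left]; omega
    rw [hsplit, Finset.sum_union hdisj]
    have h1 : ∑ i ∈ Finset.range n, P.coeff i * z ^ i
        = ∑ k ∈ Finset.Icc 1 n, P.coeff (n + k) * z ^ (n - k) := by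
      apply Finset.sum_bij' (fun i _ => n - i) (fun k _ => n - k)
      · intro i hi; simp at hi ⊢; omega
      · intro k hk; simp at hk ⊢; omega
      · intro i hi; simp at hi; omega
      · intro k hk; simp at hk; omega
      · intro i hi
        simp only [Finset.mem_range] at hi
        rw [hcoeff i (by omega)]
        congr 2 <;> omega
    have h2 : ∑ i ∈ Finset.Icc n (2 * n), P.coeff i * z ^ i
        = P.coeff n * z ^ n + ∑ k ∈ Finset.Icc 1 n, P.coeff (n + k) * z ^ (n + k) := by
      have : Finset.Icc n (2 * n) = insert n (Finset.Icc (n + 1) (2 * n)) := by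
        ext i; simp; omega
      rw [this, Finset.sum_insert (by simp)]
      congr 1
      apply Finset.sum_bij' (fun i _ => i - n) (fun k _ => n + k)
      · intro i hi; simp at hi ⊢; omega
      · intro k hk; simp at hk ⊢; omega
      · intro i hi; simp at hi; omega
      · intro k hk; simp at hk; omega
      · intro i hi
        simp only [Finset.mem_Icc] at hi
        congr 2 <;> omega
    rw [h1, h2, add_comm, add_assoc, ← Finset.sum_add_distrib]
    congr 1
    apply Finset.sum_congr rfl
    intro k hk; ring
  have hzw : z * (1 / z) = 1 := by field_simp
  have hne : (2 : ℂ) * z ^ n ≠ 0 := mul_ne_zero two_ne_zero (pow_ne_zero n hz)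
  rw [div_eq_iff hne, key, add_mul, Finset.sum_mul]
  congr 1
  · ring
  apply Finset.sum_congr rfl
  intro k hk
  simp only [Finset.mem_Icc] at hk
  rw [T_eval_half' z (1 / z) hzw k]
  have h1 : z ^ (n + k) = z ^ n * z ^ k := pow_add z n k
  have h2 : z ^ (n - k) = z ^ n / z ^ k := by
    rw [eq_div_iff (pow_ne_zero k hz), ← pow_add]
    congr 1; omega
  rw [h1, h2]
  rw [one_div, inv_pow]
  field_simp
end

section
/- Let n be a natural number not divisible by 10. Then 11 divides the pasting of n with its base-10 reversal ñ, namely 11 ∣ 10^{C(n)}·n + ñ, where C(n) = (Nat.digits 10 n).length is the number of digits of n and ñ = Nat.ofDigits 10 ((Nat.digits 10 n).reverse). -/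
lemma ofDigits_cons' (r : ZMod 11) (a : ℕ) (l : List ℕ) :
    Nat.ofDigits r (a :: l) = a + r * Nat.ofDigits r l := rfl

lemma ofDigits_concat (r : ZMod 11) (a : ℕ) (l : List ℕ) :
    Nat.ofDigits r (l ++ [a]) = Nat.ofDigits r l + r ^ l.length * a := by
  induction l with
  | nil => simp [Nat.ofDigits]
  | cons b t ih =>
    simp only [List.cons_append, ofDigits_cons', ih, List.length_cons]
    ring

lemma ofDigits_neg_one_reverse (l : List ℕ) :
    Nat.ofDigits (-1 : ZMod 11) l.reverse =
      (-1 : ZMod 11) ^ (l.length + 1) * Nat.ofDigits (-1 : ZMod 11) l := by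
  induction l with
  | nil => simp [Nat.ofDigits]
  | cons a t ih =>
    rw [List.reverse_cons, ofDigits_concat, ih, ofDigits_cons',
      List.length_reverse, List.length_cons]
    ring

theorem eleven_dvd_paste_reverse (n : ℕ) (h : ¬ (10 ∣ n)) :
    11 ∣ 10 ^ (Nat.digits 10 n).length * n +
      Nat.ofDigits 10 ((Nat.digits 10 n).reverse) := by
  rw [← ZMod.natCast_eq_zero_iff]
  push_cast
  have h10 : ((10 : ℕ) : ZMod 11) = -1 := by decide
  have hn : (n : ZMod 11) = Nat.ofDigits (-1 : ZMod 11) (Nat.digits 10 n) := by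
    rw [← h10, ← Nat.coe_ofDigits, Nat.ofDigits_digits]
  push_cast at h10
  rw [h10, hn, ofDigits_neg_one_reverse]
  ring
end
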